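/- If I is a set of morphisms in a category C, then a morphism q has the right lifting property with respect to every retract of a transfinite composition of pushouts of morphisms of I if and only if q has the right lifting property with respect to I. -/

import Mathlib

universe w v u

open CategoryTheory CategoryTheory.Limits Opposite

namespace Paper

variable {C : Type u} [Category.{v} C]

/-- `g` is a retract of `f` in the arrow category. -/
def IsRetractOfArrow {X Y A B : C} (g : X ⟶ Y) (f : A ⟶ B) : Prop :=
  ∃ (i : X ⟶ A) (r : A ⟶ X) (i' : Y ⟶ B) (r' : B ⟶ Y),
    i ≫ r = 𝟙 X ∧ i' ≫ r' = 𝟙 Y ∧ i ≫ f = g ≫ i' ∧ r ≫ g = f ≫ r'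

/-- `f` is a pushout of some morphism belonging to `I`. -/
def IsPushoutOfElem (I : MorphismProperty C) {X Y : C} (f : X ⟶ Y) : Prop :=
  ∃ (A B : C) (g : A ⟶ B) (h : A ⟶ X) (k : B ⟶ Y), I g ∧ IsPushout g h k f

/-- The inclusion of the interval `[⊥, j)` into a preorder. -/
def ltInclusion {J : Type w} [Preorder J] (j : J) : Set.Iio j ⥤ J :=
  (show Monotone (fun k : Set.Iio j => (k : J)) from fun _ _ h => h).functor

/-- The canonical cocone on the restriction of `F` to `[⊥, j)`, with vertex `F.obj j`. -/
@[simps]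
def coconeLT {J : Type w} [Preorder J] (F : J ⥤ C) (j : J) :
    Limits.Cocone (ltInclusion j ⋙ F) where
  pt := F.obj j
  ι :=
    { app := fun k => F.map (homOfLE (le_of_lt k.2))
      naturality := fun k l h => by
        dsimp [ltInclusion]
        rw [Category.comp_id]
        exact (F.map_comp _ _).symm.trans (congrArg F.map (Subsingleton.elim _ _)) }

/-- A witness that `f` is a transfinite composition of pushouts of morphisms of `I`:
a colimit-preserving well-ordered chain starting at the source of `f`, each successor
step of which is a pushout of a morphism of `I`, whose composition is `f`. -/
structure TransfiniteCompositionWitness (I : MorphismProperty C) {X Y : C} (f : X ⟶ Y) where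
  J : Type v
  [linOrd : LinearOrder J]
  [orderBot : OrderBot J]
  [succOrder : SuccOrder J]
  [wellFounded : WellFoundedLT J]
  F : J ⥤ C
  c : Limits.Cocone F
  isColimit : Limits.IsColimit c
  isoBot : X ≅ F.obj ⊥
  isoPt : c.pt ≅ Y
  fac : f = isoBot.hom ≫ c.ι.app ⊥ ≫ isoPt.hom
  succ : ∀ j : J, ¬ IsMax j → IsPushoutOfElem I (F.map (homOfLE (Order.le_succ j)))
  limit : ∀ j : J, Order.IsSuccLimit j → Nonempty (Limits.IsColimit (coconeLT F j))

/-- `cell I`: the class of transfinite compositions of pushouts of morphisms of `I`. -/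
def transfiniteCell (I : MorphismProperty C) : MorphismProperty C :=
  fun _ _ f => Nonempty (TransfiniteCompositionWitness I f)

/-- `inj I`: the class of morphisms with the right lifting property with respect to `I`. -/
def injClass (I : MorphismProperty C) : MorphismProperty C :=
  fun _ _ q => ∀ ⦃A B : C⦄ (g : A ⟶ B), I g → HasLiftingProperty g q

/-- `cof I`: the class of morphisms with the left lifting property with respect to `inj I`. -/
def cofClass (I : MorphismProperty C) : MorphismProperty C :=
  fun _ _ f => ∀ ⦃X Y : C⦄ (q : X ⟶ Y), injClass I q → HasLiftingProperty f q


theorem hlp_of_retract {X Y A B P Q : C} {g : X ⟶ Y} {f : A ⟶ B} {q : P ⟶ Q}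
    (hret : IsRetractOfArrow g f) (hf : HasLiftingProperty f q) : HasLiftingProperty g q := by
  obtain ⟨i, r, i', r', hir, hir', hc, hc'⟩ := hret
  constructor
  intro u v sq
  have sq' : CommSq (r ≫ u) f q (r' ≫ v) := ⟨by
    rw [Category.assoc, sq.w, ← Category.assoc, hc', Category.assoc]⟩
  exact ⟨⟨{ l := i' ≫ sq'.lift
            fac_left := by
              rw [← Category.assoc, ← hc, Category.assoc, sq'.fac_left,
                ← Category.assoc, hir, Category.id_comp]
            fac_right := by
              rw [Category.assoc, sq'.fac_right, ← Category.assoc, hir', Category.id_comp] }⟩⟩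

theorem hlp_of_pushout {I : MorphismProperty C} {A B X Y : C} {q : X ⟶ Y}
    (hq : ∀ ⦃P Q : C⦄ (g : P ⟶ Q), I g → HasLiftingProperty g q)
    {f : A ⟶ B} (hf : IsPushoutOfElem I f) : HasLiftingProperty f q := by
  obtain ⟨P, Q, g, h, k, hg, hpo⟩ := hf
  haveI := hq g hg
  constructor
  intro u v sq
  have sq' : CommSq (h ≫ u) g q (k ≫ v) := ⟨by
    rw [Category.assoc, sq.w, ← Category.assoc, ← hpo.w, Category.assoc]⟩
  refine ⟨⟨{ l := hpo.desc sq'.lift u (by rw [sq'.fac_left])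
             fac_left := hpo.inr_desc _ _ _
             fac_right := ?_ }⟩⟩
  apply hpo.hom_ext
  · rw [← Category.assoc, hpo.inl_desc, sq'.fac_right]
  · rw [← Category.assoc, hpo.inr_desc, sq.w]


section Fwd

variable {A B : C} (g : A ⟶ B)

attribute [local instance 2000] Preorder.smallCategory

/-- helper map for the two-object chain -/
def pairMap : ∀ (x y : Bool), x ≤ y → ((bif x then B else A) ⟶ (bif y then B else A))
  | false, false, _ => 𝟙 A
  | false, true, _ => g
  | true, true, _ => 𝟙 B
  | true, false, h => absurd h (by decide)

/-- The two-object chain `A ⟶ B`. -/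
noncomputable def pairFunctor : ULift.{v} Bool ⥤ C where
  obj b := bif b.down then B else A
  map {x y} h := pairMap g x.down y.down (@leOfHom (ULift.{v} Bool) _ x y h)
  map_id x := by cases x with
    | up b => cases b <;> rfl
  map_comp {x y z} h h' := by
    have hxy : x.down ≤ y.down := @leOfHom (ULift.{v} Bool) _ x y h
    have hyz : y.down ≤ z.down := @leOfHom (ULift.{v} Bool) _ y z h'
    cases x with | up b => cases y with | up b' => cases z with | up b'' =>
    cases b <;> cases b' <;> cases b'' <;>
      first
        | exact absurd hxy (by decide)
        | exact absurd hyz (by decide)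
        | simp [pairMap]

instance : OrderBot (ULift.{v} Bool) where
  bot := ⟨false⟩
  bot_le a := Bool.false_le a.down

noncomputable def pairWitness {I : MorphismProperty C} (hg : I g) :
    TransfiniteCompositionWitness I g where
  J := ULift.{v} Bool
  linOrd := inferInstance
  orderBot := inferInstance
  wellFounded := Finite.to_wellFoundedLT
  succOrder := @SuccOrder.ofLinearWellFoundedLT _ _ Finite.to_wellFoundedLT
  F := pairFunctor g
  c := { pt := B
         ι := { app := fun b => pairMap g b.down true (by cases b with | up b => cases b <;> decide)
                naturality := fun x y h => by
                  have hxy : x.down ≤ y.down := @leOfHom (ULift.{v} Bool) _ x y h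
                  cases x with | up b => cases y with | up b' =>
                  cases b <;> cases b' <;>
                    first
                      | exact absurd hxy (by decide)
                      | simp [pairFunctor, pairMap] } }
  isColimit :=
    { desc := fun s => s.ι.app ⟨true⟩
      fac := fun s b => by
        cases b with | up b =>
        cases b
        · exact s.w (homOfLE (Bool.false_le true : (ULift.up false : ULift.{v} Bool) ≤ ULift.up true))
        · exact Category.id_comp _
      uniq := fun s m hm => by
        have h1 : 𝟙 B ≫ m = s.ι.app ⟨true⟩ := hm ⟨true⟩
        rwa [Category.id_comp] at h1 }
  isoBot := Iso.refl A
  isoPt := Iso.refl B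
  fac := by
    show g = 𝟙 A ≫ g ≫ 𝟙 B
    simp
  succ := fun j hj => by
    letI : SuccOrder (ULift.{v} Bool) := @SuccOrder.ofLinearWellFoundedLT _ _ Finite.to_wellFoundedLT
    have honly : ∀ x : ULift.{v} Bool, (⟨false⟩ : ULift.{v} Bool) < x → x = ⟨true⟩ := by
      rintro ⟨b⟩ h
      cases b
      · exact absurd h (lt_irrefl _)
      · rfl
    cases j with | up b =>
    cases b
    · have hsucc : Order.succ (⟨false⟩ : ULift.{v} Bool) = ⟨true⟩ :=
        honly _ (Order.lt_succ_of_not_isMax hj)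
      refine ⟨A, B, g, 𝟙 A, eqToHom (show B = _ by rw [hsucc]; rfl), hg,
        (IsPushout.of_vert_isIso (C := C) (g := 𝟙 A) ⟨?_⟩)⟩
      erw [Category.id_comp]
      have hh : homOfLE (Order.le_succ (⟨false⟩ : ULift.{v} Bool)) =
          (@homOfLE (ULift.{v} Bool) _ ⟨false⟩ ⟨true⟩ (Bool.false_le true)) ≫
            (eqToHom hsucc.symm :
              (⟨true⟩ : ULift.{v} Bool) ⟶ Order.succ (⟨false⟩ : ULift.{v} Bool)) :=
        Subsingleton.elim _ _
      rw [hh, Functor.map_comp, eqToHom_map]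
      rfl
    · refine absurd (fun b hb => ?_) hj
      rcases b with ⟨b'⟩
      cases b'
      · exact Bool.false_le true
      · exact le_refl _
  limit := fun j hlim => by
    exfalso
    cases j with | up b =>
    cases b
    · exact hlim.1 (isMin_bot)
    · refine hlim.2 ⟨false⟩ ⟨(by exact Bool.false_lt_true : ((⟨false⟩ : ULift.{v} Bool) < ⟨true⟩)), ?_⟩
      rintro ⟨c⟩ h1 h2
      cases c
      · exact absurd h1 (lt_irrefl _)
      · exact absurd h2 (lt_irrefl _)

end Fwd

section Transfinite

/-- A partial lift in the transfinite induction, defined on a lower set of indices. -/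
structure PartialLift {J : Type w} [Preorder J] [OrderBot J] (F : J ⥤ C)
    (c : Limits.Cocone F) {X Y : C} (q : X ⟶ Y) (u : F.obj ⊥ ⟶ X) (v : c.pt ⟶ Y) where
  dom : Set J
  isLower : IsLowerSet dom
  bot_mem : ⊥ ∈ dom
  l : ∀ j ∈ dom, F.obj j ⟶ X
  map_l : ∀ (j) (hj : j ∈ dom) (k) (hk : k ∈ dom) (h : j ≤ k),
    F.map (homOfLE h) ≫ l k hk = l j hj
  l_bot : l ⊥ bot_mem = u
  fac : ∀ (j) (hj : j ∈ dom), l j hj ≫ q = c.ι.app j ≫ v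

instance {J : Type w} [Preorder J] [OrderBot J] (F : J ⥤ C) (c : Limits.Cocone F)
    {X Y : C} (q : X ⟶ Y) (u : F.obj ⊥ ⟶ X) (v : c.pt ⟶ Y) :
    Preorder (PartialLift F c q u v) where
  le p p' := ∃ h : p.dom ⊆ p'.dom, ∀ j (hj : j ∈ p.dom), p'.l j (h hj) = p.l j hj
  le_refl p := ⟨subset_rfl, fun _ _ => rfl⟩
  le_trans p p' p'' h h' := ⟨h.1.trans h'.1, fun j hj => (h'.2 j (h.1 hj)).trans (h.2 j hj)⟩

theorem hlp_transfinite {I : MorphismProperty C} {X Y A B : C} {q : X ⟶ Y}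
    (hq : ∀ ⦃P Q : C⦄ (g : P ⟶ Q), I g → HasLiftingProperty g q)
    {f : A ⟶ B} (w : TransfiniteCompositionWitness I f) : HasLiftingProperty f q := by
  classical
  letI := w.linOrd; letI := w.orderBot; letI := w.succOrder; letI := w.wellFounded
  have main : HasLiftingProperty (w.c.ι.app ⊥) q := by
    constructor
    intro u v sq
    -- the set of partial lifts
    set T := PartialLift w.F w.c q u v with hT
    have base : T :=
      { dom := {⊥}
        isLower := fun a b hba ha => by
          rw [Set.mem_singleton_iff] at ha ⊢
          exact le_bot_iff.mp (ha ▸ hba)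
        bot_mem := rfl
        l := fun j hj => eqToHom (congrArg w.F.obj (show j = ⊥ from hj)) ≫ u
        map_l := by
          intro j hj k hk h
          obtain rfl : j = ⊥ := hj
          obtain rfl : k = ⊥ := hk
          rw [show homOfLE h = 𝟙 (⊥ : w.J) from rfl, w.F.map_id, Category.id_comp]
        l_bot := by simp
        fac := by
          intro j hj
          obtain rfl : j = ⊥ := hj
          simpa using sq.w }
    haveI : Nonempty T := ⟨base⟩
    have hbdd : ∀ ch : Set T, IsChain (· ≤ ·) ch → ch.Nonempty → BddAbove ch := by
      intro ch hch hne
      have key : ∀ (p p' : T), p ∈ ch → p' ∈ ch → ∀ j (h : j ∈ p.dom) (h' : j ∈ p'.dom),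
          p.l j h = p'.l j h' := by
        intro p p' hp hp' j h h'
        rcases hch.total hp hp' with hle | hle
        · exact (hle.2 j h).symm
        · exact hle.2 j h'
      obtain ⟨p0, hp0⟩ := hne
      refine ⟨{ dom := {j | ∃ p : T, p ∈ ch ∧ j ∈ p.dom}
                isLower := fun a b hba ha => by
                  obtain ⟨p, hp, hap⟩ := ha
                  exact ⟨p, hp, p.isLower hba hap⟩
                bot_mem := ⟨p0, hp0, p0.bot_mem⟩
                l := fun j hj => hj.choose.l j hj.choose_spec.2
                map_l := fun j hj k hk h => by
                  have hjp : j ∈ hk.choose.dom := hk.choose.isLower h hk.choose_spec.2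
                  rw [key hj.choose hk.choose hj.choose_spec.1 hk.choose_spec.1 j
                    hj.choose_spec.2 hjp]
                  exact hk.choose.map_l j hjp k hk.choose_spec.2 h
                l_bot := by
                  exact (⟨p0, hp0, p0.bot_mem⟩ : ∃ p : T, p ∈ ch ∧ ⊥ ∈ p.dom).choose.l_bot
                fac := fun j hj => hj.choose.fac j hj.choose_spec.2 }, ?_⟩
      intro p hp
      refine ⟨fun j hj => ⟨p, hp, hj⟩, fun j hj => ?_⟩
      exact key _ p (⟨p, hp, hj⟩ : ∃ p' : T, p' ∈ ch ∧ j ∈ p'.dom).choose_spec.1 hp j _ hj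
    obtain ⟨m, hmax⟩ := zorn_le_nonempty hbdd
    -- every index belongs to the maximal domain
    have hall : ∀ j, j ∈ m.dom := by
      intro j
      induction j using WellFoundedLT.induction with
      | _ j IH =>
      by_cases hj : j ∈ m.dom
      · exact hj
      exfalso
      have hne_bot : j ≠ ⊥ := fun h => hj (h ▸ m.bot_mem)
      -- construct a lift at stage j
      obtain ⟨lj, hlj1, hlj2⟩ :
          ∃ lj : w.F.obj j ⟶ X,
            (∀ k (hk : k < j), w.F.map (homOfLE hk.le) ≫ lj = m.l k (IH k hk)) ∧
              lj ≫ q = w.c.ι.app j ≫ v := by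
        by_cases hlim : Order.IsSuccLimit j
        · obtain ⟨hcol⟩ := w.limit j hlim
          refine ⟨hcol.desc ⟨X, { app := fun k => m.l k (IH k k.2)
                                  naturality := fun k k' hk => by
                                    dsimp [ltInclusion]
                                    rw [Category.comp_id]
                                    exact m.map_l k (IH k k.2) k' (IH k' k'.2) (leOfHom hk) }⟩,
            ?_, ?_⟩
          · intro k hk
            exact hcol.fac _ ⟨k, hk⟩
          · refine hcol.hom_ext fun k => ?_
            erw [← Category.assoc, hcol.fac]
            dsimp
            erw [m.fac k (IH k k.2), ← w.c.w (homOfLE (le_of_lt k.2)), Category.assoc]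
            rfl
        · have hcov : ∃ k, k ⋖ j := by
            rw [← Order.not_isSuccPrelimit_iff_exists_covBy]
            intro hpre
            exact hlim ⟨fun h => hne_bot h.eq_bot, hpre⟩
          obtain ⟨k, hk⟩ := hcov
          have hkj : k < j := hk.lt
          have hkmem := IH k hkj
          have hknotmax : ¬ IsMax k := hkj.not_isMax
          haveI : HasLiftingProperty (w.F.map (homOfLE (Order.le_succ k))) q :=
            hlp_of_pushout hq (w.succ k hknotmax)
          have hsk : Order.succ k = j := hk.succ_eq
          subst hsk
          have sq2 : CommSq (m.l k hkmem) (w.F.map (homOfLE (Order.le_succ k))) q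
              (w.c.ι.app (Order.succ k) ≫ v) := ⟨by
            rw [m.fac k hkmem, ← w.c.w (homOfLE (Order.le_succ k)), Category.assoc]⟩
          refine ⟨sq2.lift, ?_, sq2.fac_right⟩
          intro k' hk'
          have hk'k : k' ≤ k := (Order.lt_succ_iff_of_not_isMax hknotmax).mp hk'
          rw [show (homOfLE hk'.le : k' ⟶ Order.succ k) =
              homOfLE hk'k ≫ homOfLE (Order.le_succ k) from rfl,
            Functor.map_comp, Category.assoc, sq2.fac_left]
          exact m.map_l k' (IH k' hk') k hkmem hk'k
      -- extend m by j
      let ext : T :=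
        { dom := insert j m.dom
          isLower := fun a b hba ha => by
            rcases Set.mem_insert_iff.mp ha with rfl | ha
            · rcases eq_or_lt_of_le hba with rfl | hba'
              · exact Set.mem_insert _ _
              · exact Set.mem_insert_of_mem _ (IH b hba')
            · exact Set.mem_insert_of_mem _ (m.isLower hba ha)
          bot_mem := Set.mem_insert_of_mem _ m.bot_mem
          l := fun i hi =>
            if h : i ∈ m.dom then m.l i h
            else eqToHom (congrArg w.F.obj ((Set.mem_insert_iff.mp hi).resolve_right h)) ≫ lj
          map_l := by
            intro i hi k hk h
            by_cases hkm : k ∈ m.dom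
            · have him : i ∈ m.dom := m.isLower h hkm
              rw [dif_pos hkm, dif_pos him]
              exact m.map_l i him k hkm h
            · obtain rfl : k = j := (Set.mem_insert_iff.mp hk).resolve_right hkm
              rw [dif_neg hkm]
              by_cases him : i ∈ m.dom
              · have hij : i < k := lt_of_le_of_ne h (fun h' => hj (h' ▸ him))
                rw [dif_pos him]
                simp only [eqToHom_refl, Category.id_comp]
                exact hlj1 i hij
              · obtain rfl : i = k := (Set.mem_insert_iff.mp hi).resolve_right him
                rw [dif_neg him, show homOfLE h = 𝟙 i from rfl, w.F.map_id, Category.id_comp]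
          l_bot := by
            rw [dif_pos m.bot_mem]
            exact m.l_bot
          fac := by
            intro i hi
            by_cases him : i ∈ m.dom
            · rw [dif_pos him]
              exact m.fac i him
            · obtain rfl : i = j := (Set.mem_insert_iff.mp hi).resolve_right him
              rw [dif_neg him]
              simpa using hlj2 }
      have hle : m ≤ ext := ⟨Set.subset_insert j m.dom, fun i hi => dif_pos hi⟩
      exact hj ((hmax hle).1 (Set.mem_insert j m.dom))
    -- assemble the lift
    refine ⟨⟨{ l := w.isColimit.desc ⟨X, { app := fun k => m.l k (hall k)
                                           naturality := fun k k' hk => by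
                                             dsimp
                                             rw [Category.comp_id]
                                             exact m.map_l k (hall k) k' (hall k') (leOfHom hk) }⟩
               fac_left := ?_
               fac_right := ?_ }⟩⟩
    · rw [w.isColimit.fac]
      exact m.l_bot
    · refine w.isColimit.hom_ext fun k => ?_
      rw [← Category.assoc, w.isColimit.fac]
      dsimp
      rw [m.fac k (hall k)]
  rw [w.fac]
  haveI : HasLiftingProperty (w.c.ι.app ⊥ ≫ w.isoPt.hom) q := by
    haveI := main
    infer_instance
  infer_instance

end Transfinite


/-- In a cocomplete category `C`, a morphism `q` has the right lifting
property with respect to every retract of a transfinite composition of pushouts of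
morphisms of `I` if and only if `q` has the right lifting property with respect to `I`. -/
theorem statement0 [HasColimits C] (I : MorphismProperty C) {X Y : C} (q : X ⟶ Y) :
    (∀ {A B A' B' : C} (f : A ⟶ B) (g : A' ⟶ B'),
        Nonempty (TransfiniteCompositionWitness I f) → IsRetractOfArrow g f →
          HasLiftingProperty g q) ↔
      (∀ {A B : C} (g : A ⟶ B), I g → HasLiftingProperty g q) := by
  constructor
  · intro h A B g hg
    exact h g g ⟨pairWitness g hg⟩ ⟨𝟙 A, 𝟙 A, 𝟙 B, 𝟙 B, by simp, by simp, by simp, by simp⟩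
  · intro hq A B A' B' f g ⟨w⟩ hret
    exact hlp_of_retract hret (hlp_transfinite (fun P Q g hg => hq g hg) w)


end Paper
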